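/- Let h : [0,1) → [0,∞) be continuous and integrable on [0,1), and suppose (1/(1−t)) ∫_t^1 h(s) ds → 0 as t → 1⁻. Then there exists a sequence t_n ↗ 1 such that for every n: h(t_n) ≤ 1/n, and for every σ ∈ (0, 1−t_n), (1/σ) ∫_{t_n}^{t_n+σ} h(s) ds ≤ 1/n. -/

import Mathlib

open MeasureTheory Filter Set

noncomputable section

/-- Key step: find one good time in `[τ, 1)`. -/
lemma good_time_step
    (h : ℝ → ℝ)
    (hc : ContinuousOn h (Set.Ico 0 1))
    (hint : IntegrableOn h (Set.Icc 0 1))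
    (ε : ℝ) (hε : 0 < ε)
    (τ : ℝ) (hτ0 : 0 ≤ τ) (hτ1 : τ < 1)
    (hFτ : (∫ s in τ..1, h s) < ε * (1 - τ)) :
    ∃ b, b ∈ Set.Ico τ 1 ∧ h b ≤ ε ∧
      ∀ σ : ℝ, 0 < σ → σ < 1 - b →
        (1 / σ) * ∫ s in b..(b + σ), h s ≤ ε := by
  set F : ℝ → ℝ := fun t => ∫ s in t..1, h s with hF
  have hsub : Set.uIcc τ 1 ⊆ Set.Icc (0:ℝ) 1 := by
    rw [Set.uIcc_of_le hτ1.le]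
    exact Set.Icc_subset_Icc hτ0 le_rfl
  have hintτ : IntegrableOn h (Set.uIcc τ 1) := hint.mono_set hsub
  have hFcont : ContinuousOn F (Set.Icc τ 1) := by
    have := intervalIntegral.continuousOn_primitive_interval_left (f := h)
      (a := τ) (b := 1) (μ := volume) hintτ
    rwa [Set.uIcc_of_le hτ1.le] at this
  set G : ℝ → ℝ := fun t => F t + ε * t with hG
  have hGcont : ContinuousOn G (Set.Icc τ 1) :=
    hFcont.add (continuousOn_const.mul continuousOn_id)
  obtain ⟨b, hbmem, hbmin⟩ := (isCompact_Icc).exists_isMinOn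
    (Set.nonempty_Icc.2 hτ1.le) hGcont
  have hF1 : F 1 = 0 := intervalIntegral.integral_same
  have hGτlt : G τ < G 1 := by
    simp only [hG, hF1]
    calc F τ + ε * τ < ε * (1 - τ) + ε * τ := by linarith
    _ = 0 + ε * 1 := by ring
  have hb1 : b < 1 := by
    rcases lt_or_eq_of_le hbmem.2 with hlt | heq
    · exact hlt
    · exact absurd (hbmin (Set.left_mem_Icc.2 hτ1.le)) (by rw [heq]; exact not_le.2 hGτlt)
  -- interval integrability on subintervals
  have hii : ∀ a c : ℝ, 0 ≤ a → a ≤ c → c ≤ 1 → IntervalIntegrable h volume a c := by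
    intro a c ha hac hc1
    apply (hint.mono_set _).intervalIntegrable
    rw [Set.uIcc_of_le hac]; exact Set.Icc_subset_Icc ha hc1
  -- the averaged bound
  have havgb : ∀ σ : ℝ, 0 < σ → σ < 1 - b →
      (∫ s in b..(b + σ), h s) ≤ ε * σ := by
    intro σ hσ hσ1
    have hbσ1 : b + σ < 1 := by linarith
    have hmem : b + σ ∈ Set.Icc τ 1 := ⟨by linarith [hbmem.1], hbσ1.le⟩
    have hmin := hbmin hmem
    have hsplit : (∫ s in b..(b+σ), h s) + ∫ s in (b+σ)..1, h s = ∫ s in b..1, h s :=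
      intervalIntegral.integral_add_adjacent_intervals
        (hii b (b+σ) (le_trans hτ0 hbmem.1) (by linarith) hbσ1.le)
        (hii (b+σ) 1 (by linarith [le_trans hτ0 hbmem.1]) hbσ1.le le_rfl)
    simp only [hG, hF, Set.mem_setOf_eq, IsMinOn, IsMinFilter] at hmin
    have : (∫ s in b..1, h s) - ∫ s in (b+σ)..1, h s ≤ ε * σ := by linarith
    linarith [hsplit]
  have hb0 : 0 ≤ b := le_trans hτ0 hbmem.1
  refine ⟨b, ⟨hbmem.1, hb1⟩, ?_, ?_⟩
  · -- pointwise bound by contradiction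
    by_contra hcon
    push_neg at hcon
    set c : ℝ := (ε + h b) / 2 with hcdef
    have hcε : ε < c := by simp [hcdef]; linarith
    have hchb : c < h b := by simp [hcdef]; linarith
    have hcw : ContinuousWithinAt h (Set.Ico 0 1) b := hc b ⟨hb0, hb1⟩
    have hev : ∀ᶠ x in nhdsWithin b (Set.Ico 0 1), c < h x :=
      hcw.eventually (eventually_gt_nhds hchb)
    rw [Filter.Eventually, Metric.mem_nhdsWithin_iff] at hev
    obtain ⟨δ, hδ, hδbd⟩ := hev
    set σ : ℝ := min (δ / 2) ((1 - b) / 2) with hσdef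
    have hσpos : 0 < σ := lt_min (by linarith) (by linarith)
    have hσlt : σ < 1 - b := lt_of_le_of_lt (min_le_right _ _) (by linarith)
    have hptwise : ∀ x ∈ Set.Icc b (b + σ), c ≤ h x := by
      intro x hx
      have hσδ : σ ≤ δ / 2 := min_le_left _ _
      refine le_of_lt (hδbd ⟨?_, ?_, ?_⟩)
      · rw [Metric.mem_ball, Real.dist_eq, abs_lt]
        exact ⟨by linarith [hx.1], by linarith [hx.2]⟩
      · linarith [hx.1]
      · linarith [hx.2]
    have hconst : (∫ _ in b..(b+σ), c) ≤ ∫ s in b..(b+σ), h s := by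
      apply intervalIntegral.integral_mono_on (by linarith) _ _ hptwise
      · exact intervalIntegrable_const
      · exact hii b (b+σ) hb0 (by linarith) (by linarith)
    rw [intervalIntegral.integral_const, smul_eq_mul] at hconst
    have hub := havgb σ hσpos hσlt
    nlinarith
  · intro σ hσ hσ1
    have := havgb σ hσ hσ1
    rw [div_mul_eq_mul_div, div_le_iff₀ hσ]
    linarith [this]

/-- One step: given a previous time `a`, find a strictly later good time. -/
lemma good_time_step' 
    (h : ℝ → ℝ)
    (hc : ContinuousOn h (Set.Ico 0 1))
    (hint : IntegrableOn h (Set.Icc 0 1))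
    (havg : Tendsto (fun t => (1 / (1 - t)) * ∫ s in t..1, h s)
      (nhdsWithin 1 (Set.Iio 1)) (nhds 0))
    (n : ℕ) (a : ℝ) (ha : a ∈ Set.Ico (0:ℝ) 1) :
    ∃ b, b ∈ Set.Ico (0:ℝ) 1 ∧ a < b ∧ 1 - 1/(n+1) ≤ b ∧ h b ≤ 1/(n+1) ∧
      ∀ σ : ℝ, 0 < σ → σ < 1 - b →
        (1 / σ) * ∫ s in b..(b + σ), h s ≤ 1/(n+1) := by
  set ε : ℝ := 1/(n+1) with hεdef
  have hε : 0 < ε := by positivity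
  have hev : ∀ᶠ t in nhdsWithin 1 (Set.Iio 1),
      (1 / (1 - t)) * (∫ s in t..1, h s) < ε := havg.eventually (eventually_lt_nhds hε)
  rw [Filter.Eventually, mem_nhdsLT_iff_exists_Ioo_subset] at hev
  obtain ⟨l, hl, hlsub⟩ := hev
  set τ : ℝ := max (max ((a+1)/2) (1 - ε)) ((l+1)/2) with hτdef
  have ha1 : a < 1 := ha.2
  have hl1 : l < 1 := hl
  have hτ1 : τ < 1 := by
    simp only [hτdef, max_lt_iff]
    exact ⟨⟨by linarith, by linarith⟩, by linarith⟩
  have hτa : (a+1)/2 ≤ τ := le_trans (le_max_left _ _) (le_max_left _ _)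
  have hτ0 : 0 ≤ τ := le_trans (by linarith [ha.1]) hτa
  have hτl : l < τ := lt_of_lt_of_le (by linarith) (le_max_right _ _)
  have hτε : 1 - ε ≤ τ := le_trans (le_max_right _ _) (le_max_left _ _)
  have hτmem : τ ∈ Set.Ioo l 1 := ⟨hτl, hτ1⟩
  have hτbd : (1 / (1 - τ)) * (∫ s in τ..1, h s) < ε := hlsub hτmem
  have h1τ : 0 < 1 - τ := by linarith
  have hFτ : (∫ s in τ..1, h s) < ε * (1 - τ) := by
    have := mul_lt_mul_of_pos_left hτbd h1τ
    rw [← mul_assoc, mul_one_div, div_self (ne_of_gt h1τ), one_mul] at this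
    linarith
  obtain ⟨b, hbmem, hbpt, hbavg⟩ := good_time_step h hc hint ε hε τ hτ0 hτ1 hFτ
  exact ⟨b, ⟨le_trans hτ0 hbmem.1, hbmem.2⟩, lt_of_lt_of_le (by linarith) (le_trans hτa hbmem.1),
    le_trans hτε hbmem.1, hbpt, hbavg⟩


/-- Extraction of good times: if `h ≥ 0` is continuous and integrable
on `[0,1)` and `(1/(1−t)) ∫_t^1 h → 0` as `t → 1⁻`, then there is a sequence `t_n ↗ 1`
with `h(t_n) ≤ 1/(n+1)` and `(1/σ) ∫_{t_n}^{t_n+σ} h ≤ 1/(n+1)` for all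
`σ ∈ (0, 1 − t_n)`. -/

theorem good_times_extraction
    (h : ℝ → ℝ)
    (hc : ContinuousOn h (Set.Ico 0 1))
    (hpos : ∀ t ∈ Set.Ico (0:ℝ) 1, 0 ≤ h t)
    (hint : IntegrableOn h (Set.Ico 0 1))
    (havg : Tendsto (fun t => (1 / (1 - t)) * ∫ s in t..1, h s)
      (nhdsWithin 1 (Set.Iio 1)) (nhds 0)) :
    ∃ t : ℕ → ℝ, StrictMono t ∧ (∀ n, t n ∈ Set.Ico (0:ℝ) 1) ∧
      Tendsto t atTop (nhds 1) ∧
      ∀ n : ℕ, h (t n) ≤ 1 / (n + 1) ∧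
        ∀ σ : ℝ, 0 < σ → σ < 1 - t n →
          (1 / σ) * ∫ s in (t n)..(t n + σ), h s ≤ 1 / (n + 1) := by

  have hintIcc : IntegrableOn h (Set.Icc 0 1) :=
    (integrableOn_Icc_iff_integrableOn_Ico (by finiteness)).2 hint
  have step := good_time_step' h hc hintIcc havg
  choose f hf1 hf2 hf3 hf4 hf5 using step
  have h0 : (0:ℝ) ∈ Set.Ico (0:ℝ) 1 := ⟨le_rfl, one_pos⟩
  set g : ℕ → {x : ℝ // x ∈ Set.Ico (0:ℝ) 1} := fun n =>
    Nat.rec ⟨f 0 0 h0, hf1 0 0 h0⟩ (fun k p => ⟨f (k+1) p.1 p.2, hf1 (k+1) p.1 p.2⟩) n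
    with hgdef
  set t : ℕ → ℝ := fun n => (g n).1 with htdef
  have hgsucc : ∀ n, t (n+1) = f (n+1) (t n) (g n).2 := fun n => rfl
  have hmem : ∀ n, t n ∈ Set.Ico (0:ℝ) 1 := fun n => (g n).2
  have hmono : StrictMono t := by
    apply strictMono_nat_of_lt_succ
    intro n
    rw [hgsucc n]
    exact hf2 (n+1) (t n) (g n).2
  have hlb : ∀ n : ℕ, 1 - 1/(n+1) ≤ t n := by
    intro n
    cases n with
    | zero => change _ ≤ f 0 0 h0; simpa using hf3 0 0 h0
    | succ k =>
      rw [hgsucc k]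
      exact hf3 (k+1) (t k) (g k).2
  have htend : Tendsto t atTop (nhds 1) := by
    have hlow : Tendsto (fun n : ℕ => 1 - 1/(n+1 : ℝ)) atTop (nhds 1) := by
      have := tendsto_one_div_add_atTop_nhds_zero_nat (𝕜 := ℝ)
      have h2 := tendsto_const_nhds (X := ℝ) (x := 1) (f := atTop (α := ℕ)) |>.sub this
      simpa using h2
    exact tendsto_of_tendsto_of_tendsto_of_le_of_le hlow tendsto_const_nhds
      hlb (fun n => (hmem n).2.le)
  refine ⟨t, hmono, hmem, htend, fun n => ?_⟩
  cases n with
  | zero => exact ⟨by change h (f 0 0 h0) ≤ _; simpa using hf4 0 0 h0, by change ∀ σ : ℝ, 0 < σ → σ < 1 - f 0 0 h0 → (1 / σ) * ∫ s in (f 0 0 h0)..(f 0 0 h0 + σ), h s ≤ 1 / (((0:ℕ):ℝ) + 1); simpa using hf5 0 0 h0⟩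
  | succ k =>
    constructor
    · have := hf4 (k+1) (t k) (g k).2
      rw [hgsucc k]
      simpa using this
    · have := hf5 (k+1) (t k) (g k).2
      rw [hgsucc k]
      simpa using this
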